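/- arXiv:2203.02534 — 6 statements merged into one kernel-verified Lean document; each statement's English description precedes it below -/
import Mathlib

section
/- For all α, β > 0 and every function f : ℤ≥0 → ℝ, the discrete dilation operators satisfy the multiplicative semigroup property 𝔻_{αβ} f = 𝔻_α (𝔻_β f), where 𝔻_α f(n) = ∑_{r=0}^n C(n,r) α^r (1-α)^{n-r} f(r). -/
/-- The discrete dilation operator. -/
noncomputable def DD (α : ℝ) (f : ℕ → ℝ) (n : ℕ) : ℝ :=
  ∑ r ∈ Finset.range (n + 1), (n.choose r : ℝ) * α ^ r * (1 - α) ^ (n - r) * f r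

/-- Multiplicative semigroup property of the discrete dilation operators:
`𝔻_{αβ} f = 𝔻_α (𝔻_β f)` for all `α, β > 0`. -/
theorem discrete_dilation_semigroup (α β : ℝ) (hα : 0 < α) (hβ : 0 < β)
    (f : ℕ → ℝ) (n : ℕ) :
    DD (α * β) f n = DD α (DD β f) n := by
  unfold DD
  simp_rw [Finset.mul_sum]
  rw [Finset.sum_comm' (t' := Finset.range (n + 1))
      (s' := fun r => Finset.Ico r (n + 1)) (by
        intro k r
        simp only [Finset.mem_range, Finset.mem_Ico]
        omega)]
  refine Finset.sum_congr rfl fun r hr => ?_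
  simp only [Finset.mem_range] at hr
  have hrn : r ≤ n := Nat.lt_succ_iff.mp hr
  rw [Finset.sum_Ico_eq_sum_range]
  have key : ∀ j ∈ Finset.range (n + 1 - r),
      (n.choose (r + j) : ℝ) * α ^ (r + j) * (1 - α) ^ (n - (r + j)) *
        ((((r + j).choose r : ℝ)) * β ^ r * (1 - β) ^ (r + j - r) * f r)
      = ((n.choose r : ℝ) * (α * β) ^ r * f r) *
          (((n - r).choose j : ℝ) * (α * (1 - β)) ^ j * (1 - α) ^ (n - r - j)) := by
    intro j hj
    simp only [Finset.mem_range] at hj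
    have hkn : r + j ≤ n := by omega
    have hc : (n.choose (r + j) : ℝ) * ((r + j).choose r : ℝ)
        = (n.choose r : ℝ) * ((n - r).choose j : ℝ) := by
      rw [← Nat.cast_mul, ← Nat.cast_mul, Nat.choose_mul (Nat.le_add_right r j),
        Nat.add_sub_cancel_left]
    have h1 : n - (r + j) = n - r - j := by omega
    have h2 : r + j - r = j := by omega
    rw [h1, h2, pow_add, mul_pow, mul_pow]
    linear_combination (α ^ r * α ^ j * (1 - α) ^ (n - r - j) * β ^ r * (1 - β) ^ j * f r) * hc
  rw [Finset.sum_congr rfl key, ← Finset.mul_sum]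
  have hb : ∑ j ∈ Finset.range (n + 1 - r),
      ((n - r).choose j : ℝ) * (α * (1 - β)) ^ j * (1 - α) ^ (n - r - j)
      = (α * (1 - β) + (1 - α)) ^ (n - r) := by
    have := add_pow (α * (1 - β)) (1 - α) (n - r)
    have hE : n + 1 - r = (n - r) + 1 := by omega
    rw [hE, this]
    refine Finset.sum_congr rfl fun j hj => ?_
    ring
  rw [hb]
  have : α * (1 - β) + (1 - α) = 1 - α * β := by ring
  rw [this]
  ring
end

section
/- The Poisson kernel Λ is a contraction from ℓ²(ℤ≥0, counting measure) to L²(ℝ≥0, Lebesgue): for every f ∈ ℓ²(ℤ≥0), ∫_0^∞ (∑_{n≥0} e^{-x} x^n f(n)/n!)² dx ≤ ∑_{n≥0} f(n)². -/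
open MeasureTheory

/-- The Poissonization kernel `Λ f(x) = E[f(Pois(x))]`. -/
noncomputable def Lam (f : ℕ → ℝ) (x : ℝ) : ℝ :=
  ∑' n : ℕ, Real.exp (-x) * x ^ n / (n.factorial : ℝ) * f n

/-- Cauchy–Schwarz for `ℝ≥0∞`-valued series. -/
lemma ennreal_cs (a b : ℕ → ENNReal) :
    (∑' n, a n * b n) ^ 2 ≤ (∑' n, a n ^ 2) * (∑' n, b n ^ 2) := by
  have hpq : Real.HolderConjugate 2 2 := ⟨by norm_num, by norm_num, by norm_num⟩
  have h := ENNReal.lintegral_mul_le_Lp_mul_Lq (Measure.count : Measure ℕ) hpq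
    (measurable_of_countable a).aemeasurable (measurable_of_countable b).aemeasurable
  simp only [Pi.mul_apply, lintegral_count] at h
  have h2 := pow_le_pow_left₀ zero_le h 2
  calc (∑' n, a n * b n) ^ 2
      ≤ ((∑' n, a n ^ (2:ℝ)) ^ (1/(2:ℝ)) * (∑' n, b n ^ (2:ℝ)) ^ (1/(2:ℝ))) ^ 2 := h2
    _ = (∑' n, a n ^ 2) * (∑' n, b n ^ 2) := by
        rw [mul_pow, ← ENNReal.rpow_natCast (_ ^ (1/(2:ℝ))) 2,
          ← ENNReal.rpow_natCast (_ ^ (1/(2:ℝ))) 2, ← ENNReal.rpow_mul, ← ENNReal.rpow_mul]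
        norm_num

lemma poisson_weight_nonneg {x : ℝ} (hx : 0 < x) (n : ℕ) :
    0 ≤ Real.exp (-x) * x ^ n / (n.factorial : ℝ) := by
  positivity

lemma poisson_weight_tsum {x : ℝ} :
    ∑' n : ℕ, Real.exp (-x) * x ^ n / (n.factorial : ℝ) = 1 := by
  have : ∀ n : ℕ, Real.exp (-x) * x ^ n / (n.factorial : ℝ)
      = Real.exp (-x) * (x ^ n / (n.factorial : ℝ)) := fun n => by ring
  simp_rw [this, tsum_mul_left]
  have hexp : ∑' n : ℕ, x ^ n / (n.factorial : ℝ) = Real.exp x := by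
    rw [Real.exp_eq_exp_ℝ, NormedSpace.exp_eq_tsum_div]
  rw [hexp, ← Real.exp_add]
  simp

lemma poisson_weight_summable (x : ℝ) :
    Summable (fun n : ℕ => Real.exp (-x) * x ^ n / (n.factorial : ℝ)) := by
  have : ∀ n : ℕ, Real.exp (-x) * x ^ n / (n.factorial : ℝ)
      = Real.exp (-x) * (x ^ n / (n.factorial : ℝ)) := fun n => by ring
  simp_rw [this]
  exact (Real.summable_pow_div_factorial x).mul_left _

/-- Pointwise bound (Cauchy–Schwarz / Jensen): `(Λ f x)² ≤ Λ (f²) x` for `x > 0`. -/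
lemma lam_sq_le (f : ℕ → ℝ) (hf : Summable fun n => f n ^ 2) {x : ℝ} (hx : 0 < x) :
    ENNReal.ofReal ((Lam f x) ^ 2) ≤
      ∑' n : ℕ, ENNReal.ofReal (Real.exp (-x) * x ^ n / (n.factorial : ℝ) * f n ^ 2) := by
  set w : ℕ → ℝ := fun n => Real.exp (-x) * x ^ n / (n.factorial : ℝ) with hw
  have hw0 : ∀ n, 0 ≤ w n := poisson_weight_nonneg hx
  have hwle : ∀ n, w n ≤ 1 := by
    intro n
    have := Summable.le_tsum (poisson_weight_summable x) n (fun m _ => hw0 m)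
    rwa [poisson_weight_tsum] at this
  -- summability of w * f²
  have hwf2 : Summable fun n => w n * f n ^ 2 := by
    refine Summable.of_nonneg_of_le (fun n => mul_nonneg (hw0 n) (sq_nonneg _))
      (fun n => ?_) hf
    calc w n * f n ^ 2 ≤ 1 * f n ^ 2 :=
          mul_le_mul_of_nonneg_right (hwle n) (sq_nonneg _)
      _ = f n ^ 2 := one_mul _
  -- summability of w * |f|
  have hwf : Summable fun n => w n * |f n| := by
    refine Summable.of_nonneg_of_le (fun n => mul_nonneg (hw0 n) (abs_nonneg _))
      (fun n => ?_) (((poisson_weight_summable x).add hwf2).mul_left (1/2))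
    have h1 : w n * |f n| = Real.sqrt (w n) * (Real.sqrt (w n) * |f n|) := by
      rw [← mul_assoc, Real.mul_self_sqrt (hw0 n)]
    have h2 : 2 * (Real.sqrt (w n) * (Real.sqrt (w n) * |f n|))
        ≤ Real.sqrt (w n) ^ 2 + (Real.sqrt (w n) * |f n|) ^ 2 := by
      have := two_mul_le_add_sq (Real.sqrt (w n)) (Real.sqrt (w n) * |f n|)
      linarith
    rw [h1]
    have h3 : Real.sqrt (w n) ^ 2 = w n := Real.sq_sqrt (hw0 n)
    have h4 : (Real.sqrt (w n) * |f n|) ^ 2 = w n * f n ^ 2 := by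
      rw [mul_pow, h3, sq_abs]
    nlinarith [h2]
  -- |Lam f x| ≤ ∑ w |f|
  have habs : |Lam f x| ≤ ∑' n, w n * |f n| := by
    have := norm_tsum_le_tsum_norm (f := fun n => w n * f n)
      (by simpa [Real.norm_eq_abs, abs_mul, abs_of_nonneg (hw0 _)] using hwf)
    simpa [Lam, Real.norm_eq_abs, abs_mul, abs_of_nonneg (hw0 _)] using this
  -- pass to ENNReal
  set a : ℕ → ENNReal := fun n => ENNReal.ofReal (Real.sqrt (w n))
  set b : ℕ → ENNReal := fun n => ENNReal.ofReal (Real.sqrt (w n) * |f n|)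
  have hab : ∀ n, a n * b n = ENNReal.ofReal (w n * |f n|) := by
    intro n
    rw [← ENNReal.ofReal_mul (Real.sqrt_nonneg _), ← mul_assoc,
      Real.mul_self_sqrt (hw0 n)]
  have ha2 : ∀ n, a n ^ 2 = ENNReal.ofReal (w n) := by
    intro n
    rw [← ENNReal.ofReal_pow (Real.sqrt_nonneg _), Real.sq_sqrt (hw0 n)]
  have hb2 : ∀ n, b n ^ 2 = ENNReal.ofReal (w n * f n ^ 2) := by
    intro n
    rw [← ENNReal.ofReal_pow (mul_nonneg (Real.sqrt_nonneg _) (abs_nonneg _)),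
      mul_pow, Real.sq_sqrt (hw0 n), sq_abs]
  have hsum_a : ∑' n, a n ^ 2 = 1 := by
    simp_rw [ha2]
    rw [← ENNReal.ofReal_tsum_of_nonneg hw0 (poisson_weight_summable x),
      poisson_weight_tsum, ENNReal.ofReal_one]
  calc ENNReal.ofReal ((Lam f x) ^ 2)
      = ENNReal.ofReal (|Lam f x|) ^ 2 := by
        rw [← ENNReal.ofReal_pow (abs_nonneg _), sq_abs]
    _ ≤ ENNReal.ofReal (∑' n, w n * |f n|) ^ 2 := by
        exact pow_le_pow_left₀ zero_le (ENNReal.ofReal_le_ofReal habs) 2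
    _ = (∑' n, a n * b n) ^ 2 := by
        rw [ENNReal.ofReal_tsum_of_nonneg (fun n => mul_nonneg (hw0 n) (abs_nonneg _)) hwf]
        simp_rw [hab]
    _ ≤ (∑' n, a n ^ 2) * (∑' n, b n ^ 2) := ennreal_cs a b
    _ = ∑' n, ENNReal.ofReal (w n * f n ^ 2) := by
        rw [hsum_a, one_mul]; simp_rw [hb2]

lemma poisson_weight_integral (n : ℕ) :
    ∫⁻ x in Set.Ioi (0 : ℝ),
      ENNReal.ofReal (Real.exp (-x) * x ^ n / (n.factorial : ℝ)) = 1 := by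
  have hint : IntegrableOn (fun x : ℝ => Real.exp (-x) * x ^ ((n : ℝ) + 1 - 1))
      (Set.Ioi 0) := Real.GammaIntegral_convergent (by positivity)
  have hcong : ∀ x ∈ Set.Ioi (0:ℝ),
      Real.exp (-x) * x ^ ((n : ℝ) + 1 - 1) = Real.exp (-x) * x ^ n := by
    intro x hx
    rw [add_sub_cancel_right, Real.rpow_natCast]
  have hint' : IntegrableOn (fun x : ℝ => Real.exp (-x) * x ^ n) (Set.Ioi 0) :=
    hint.congr_fun hcong measurableSet_Ioi
  have hval : ∫ x in Set.Ioi (0:ℝ), Real.exp (-x) * x ^ n = (n.factorial : ℝ) := by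
    have h1 := Real.Gamma_eq_integral (s := (n : ℝ) + 1) (by positivity)
    rw [Real.Gamma_nat_eq_factorial] at h1
    rw [h1]
    exact (setIntegral_congr_fun measurableSet_Ioi hcong).symm
  have hd : ∀ x : ℝ, Real.exp (-x) * x ^ n / (n.factorial : ℝ)
      = (Real.exp (-x) * x ^ n) * (1 / (n.factorial : ℝ)) := fun x => by ring
  simp_rw [hd]
  rw [← ofReal_integral_eq_lintegral_ofReal (hint'.mul_const _)
    ((ae_restrict_iff' measurableSet_Ioi).2 (ae_of_all _ fun x hx => by have : (0:ℝ) < x := hx; positivity))]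
  rw [integral_mul_const, hval]
  rw [mul_one_div, div_self (by positivity : (n.factorial : ℝ) ≠ 0), ENNReal.ofReal_one]

/-- `Λ` is a contraction from `ℓ²(ℤ₊)` to `L²(ℝ₊)`:
`∫_0^∞ (Λ f x)² dx ≤ ∑ f(n)²`. -/
theorem poisson_kernel_contraction (f : ℕ → ℝ) (hf : Summable fun n => f n ^ 2) :
    ∫⁻ x in Set.Ioi (0 : ℝ), ENNReal.ofReal ((Lam f x) ^ 2) ≤
      ENNReal.ofReal (∑' n, f n ^ 2) := by
  have step1 : ∫⁻ x in Set.Ioi (0 : ℝ), ENNReal.ofReal ((Lam f x) ^ 2) ≤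
      ∫⁻ x in Set.Ioi (0 : ℝ), ∑' n : ℕ,
        ENNReal.ofReal (Real.exp (-x) * x ^ n / (n.factorial : ℝ) * f n ^ 2) := by
    refine lintegral_mono_ae ((ae_restrict_iff' measurableSet_Ioi).2 (ae_of_all _ ?_))
    exact fun x hx => lam_sq_le f hf hx
  have step2 : ∫⁻ x in Set.Ioi (0 : ℝ), ∑' n : ℕ,
        ENNReal.ofReal (Real.exp (-x) * x ^ n / (n.factorial : ℝ) * f n ^ 2)
      = ∑' n : ℕ, ∫⁻ x in Set.Ioi (0 : ℝ),
        ENNReal.ofReal (Real.exp (-x) * x ^ n / (n.factorial : ℝ) * f n ^ 2) := by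
    refine lintegral_tsum fun n => ?_
    refine (ENNReal.measurable_ofReal.comp ?_).aemeasurable
    fun_prop
  have step3 : ∀ n : ℕ, ∫⁻ x in Set.Ioi (0 : ℝ),
      ENNReal.ofReal (Real.exp (-x) * x ^ n / (n.factorial : ℝ) * f n ^ 2)
      = ENNReal.ofReal (f n ^ 2) := by
    intro n
    have : ∀ x ∈ Set.Ioi (0:ℝ), ENNReal.ofReal (Real.exp (-x) * x ^ n / (n.factorial : ℝ) * f n ^ 2)
        = ENNReal.ofReal (Real.exp (-x) * x ^ n / (n.factorial : ℝ)) * ENNReal.ofReal (f n ^ 2) := by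
      intro x hx
      rw [← ENNReal.ofReal_mul (poisson_weight_nonneg hx n)]
    rw [setLIntegral_congr_fun measurableSet_Ioi this,
      lintegral_mul_const _ (by fun_prop), poisson_weight_integral, one_mul]
  calc ∫⁻ x in Set.Ioi (0 : ℝ), ENNReal.ofReal ((Lam f x) ^ 2)
      ≤ ∑' n : ℕ, ∫⁻ x in Set.Ioi (0 : ℝ),
        ENNReal.ofReal (Real.exp (-x) * x ^ n / (n.factorial : ℝ) * f n ^ 2) :=
        step1.trans step2.le
    _ = ∑' n : ℕ, ENNReal.ofReal (f n ^ 2) := by simp_rw [step3]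
    _ = ENNReal.ofReal (∑' n, f n ^ 2) :=
        (ENNReal.ofReal_tsum_of_nonneg (fun n => sq_nonneg _) hf).symm
end

section
/- The Poisson kernel Λ : ℓ²(ℤ≥0) → L²(ℝ≥0) is injective: if f ∈ ℓ²(ℤ≥0) and ∑_{n≥0} e^{-x} x^n f(n)/n! = 0 for almost every x > 0, then f = 0. -/
set_option maxHeartbeats 1000000
open MeasureTheory

/-- `Λ : ℓ²(ℤ₊) → L²(ℝ₊)` is injective: if `Λ f = 0` a.e. on `(0,∞)` then `f = 0`. -/
theorem poisson_kernel_injective (f : ℕ → ℝ) (hf : Summable fun n => f n ^ 2)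
    (h : ∀ᵐ x ∂(volume.restrict (Set.Ioi (0 : ℝ))), Lam f x = 0) :
    f = 0 := by
  -- A uniform bound on |f n|
  obtain ⟨C, hC0, hC⟩ : ∃ C, 0 ≤ C ∧ ∀ n, |f n| ≤ C := by
    refine ⟨Real.sqrt (∑' n, f n ^ 2), Real.sqrt_nonneg _, fun n => ?_⟩
    rw [← Real.sqrt_sq_eq_abs]
    exact Real.sqrt_le_sqrt (Summable.le_tsum hf n fun m _ => sq_nonneg _)
  -- the zero set of Lam f accumulates at 0 from the right
  have hdense : ∀ δ : ℝ, 0 < δ → ∃ x : ℝ, 0 < x ∧ x < δ ∧ Lam f x = 0 := by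
    intro δ hδ
    by_contra hcon
    push_neg at hcon
    rw [ae_restrict_iff' measurableSet_Ioi] at h
    have hsub : Set.Ioo (0:ℝ) δ ⊆ {x | ¬ (x ∈ Set.Ioi (0:ℝ) → Lam f x = 0)} := by
      intro x hx
      simp only [Set.mem_setOf_eq, Set.mem_Ioi]
      push_neg
      exact ⟨hx.1, hcon x hx.1 hx.2⟩
    have h0 : volume (Set.Ioo (0:ℝ) δ) = 0 := measure_mono_null hsub (ae_iff.mp h)
    rw [Real.volume_Ioo] at h0
    simp only [ENNReal.ofReal_eq_zero, sub_zero] at h0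
    linarith
  -- basic summability
  have hfac : ∀ (k : ℕ), (0:ℝ) < (k.factorial : ℝ) := fun k => by
    exact_mod_cast k.factorial_pos
  have hsum : ∀ x : ℝ, 0 ≤ x → ∀ m : ℕ,
      Summable fun k : ℕ => f (k + m) / ((k + m).factorial : ℝ) * x ^ k := by
    intro x hx m
    have hg : Summable fun k : ℕ => C * (x ^ k / (k.factorial : ℝ)) :=
      (Real.summable_pow_div_factorial x).mul_left C
    refine Summable.of_norm_bounded hg fun k => ?_
    have h1 : ((k.factorial : ℝ)) ≤ ((k + m).factorial : ℝ) := by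
      exact_mod_cast Nat.factorial_le (Nat.le_add_right k m)
    have hxk : (0:ℝ) ≤ x ^ k := pow_nonneg hx k
    rw [Real.norm_eq_abs, abs_mul, abs_div, abs_pow, abs_of_nonneg hx]
    calc |f (k + m)| / |((k + m).factorial : ℝ)| * x ^ k
        ≤ C / (k.factorial : ℝ) * x ^ k := by
          apply mul_le_mul_of_nonneg_right _ hxk
          rw [abs_of_pos (hfac _)]
          exact div_le_div₀ hC0 (hC _) (hfac k) h1
      _ = C * (x ^ k / (k.factorial : ℝ)) := by ring
  -- the constant D = ∑ 1/k!
  set D : ℝ := ∑' k : ℕ, (1:ℝ) ^ k / (k.factorial : ℝ) with hD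
  have hDsum : Summable fun k : ℕ => (1:ℝ) ^ k / (k.factorial : ℝ) :=
    Real.summable_pow_div_factorial 1
  have hD0 : 0 ≤ D := tsum_nonneg fun k => div_nonneg (by positivity) (hfac k).le
  -- main induction
  have key : ∀ n : ℕ, (∀ k, k < n → f k = 0) → f n = 0 := by
    intro n ih
    -- For every small zero x of Lam f, |f n / n!| ≤ C * x * D
    have main : ∀ x : ℝ, 0 < x → x ≤ 1 → Lam f x = 0 →
        |f n / (n.factorial : ℝ)| ≤ C * x * D := by
      intro x hx hx1 hLam
      have hx0 : (0:ℝ) ≤ x := hx.le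
      -- step 1: ∑' k, f k / k! * x^k = 0
      have h1 : (∑' k : ℕ, f k / (k.factorial : ℝ) * x ^ k) = 0 := by
        have : Lam f x = Real.exp (-x) * ∑' k : ℕ, f k / (k.factorial : ℝ) * x ^ k := by
          rw [Lam, ← tsum_mul_left]
          exact tsum_congr fun k => by ring
        rw [hLam] at this
        have he := Real.exp_ne_zero (-x)
        rcases mul_eq_zero.mp this.symm with h' | h'
        · exact absurd h' he
        · exact h'
      -- step 2: ∑' k, f (k+n) / (k+n)! * x^k = 0
      have h2 : (∑' k : ℕ, f (k + n) / ((k + n).factorial : ℝ) * x ^ k) = 0 := by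
        have hs0 : Summable fun k : ℕ => f k / (k.factorial : ℝ) * x ^ k := by
          simpa using hsum x hx0 0
        have hsplit := Summable.sum_add_tsum_nat_add (f := fun k : ℕ =>
          f k / (k.factorial : ℝ) * x ^ k) n hs0
        rw [h1] at hsplit
        have hzero : (∑ i ∈ Finset.range n, f i / (i.factorial : ℝ) * x ^ i) = 0 := by
          apply Finset.sum_eq_zero
          intro i hi
          rw [ih i (Finset.mem_range.mp hi)]
          ring
        rw [hzero, zero_add] at hsplit
        have hfactor : (∑' k : ℕ, f (k + n) / ((k + n).factorial : ℝ) * x ^ (k + n))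
            = (∑' k : ℕ, f (k + n) / ((k + n).factorial : ℝ) * x ^ k) * x ^ n := by
          rw [← tsum_mul_right]
          exact tsum_congr fun k => by rw [pow_add]; ring
        rw [hfactor] at hsplit
        have hxn : x ^ n ≠ 0 := pow_ne_zero n hx.ne'
        exact (mul_eq_zero.mp hsplit).resolve_right hxn
      -- step 3: extract the first term
      have hs1 : Summable fun k : ℕ => f (k + n) / ((k + n).factorial : ℝ) * x ^ k :=
        hsum x hx0 n
      have h3 := Summable.tsum_eq_zero_add hs1
      rw [h2] at h3
      simp only [pow_zero, mul_one, zero_add, Nat.zero_add] at h3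
      -- f n / n! = - ∑' k, f (k+1+n)/(k+1+n)! * x^(k+1)
      have h4 : f n / (n.factorial : ℝ)
          = - ∑' k : ℕ, f (k + 1 + n) / ((k + 1 + n).factorial : ℝ) * x ^ (k + 1) := by
        linarith [h3.symm]
      rw [h4, abs_neg]
      -- bound the tail
      have hs2 : Summable fun k : ℕ => f (k + 1 + n) / ((k + 1 + n).factorial : ℝ) * x ^ (k + 1) := by
        have h' := (hsum x hx0 (n + 1)).mul_right x
        refine h'.congr fun k => ?_
        have hk : k + (n + 1) = k + 1 + n := by omega
        rw [hk, pow_succ]; ring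
      calc |∑' k : ℕ, f (k + 1 + n) / ((k + 1 + n).factorial : ℝ) * x ^ (k + 1)|
          ≤ ∑' k : ℕ, ‖f (k + 1 + n) / ((k + 1 + n).factorial : ℝ) * x ^ (k + 1)‖ := by
            exact norm_tsum_le_tsum_norm hs2.norm
        _ ≤ ∑' k : ℕ, C * x * ((1:ℝ) ^ k / (k.factorial : ℝ)) := by
            apply Summable.tsum_le_tsum _ hs2.norm ((hDsum.mul_left (C * x)))
            intro k
            have h1k : ((k.factorial : ℝ)) ≤ ((k + 1 + n).factorial : ℝ) := by
              exact_mod_cast Nat.factorial_le (by omega)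
            rw [Real.norm_eq_abs, abs_mul, abs_div, abs_pow, abs_of_nonneg hx0]
            have hxk1 : x ^ k ≤ 1 ^ k := pow_le_pow_left₀ hx0 hx1 k
            calc |f (k + 1 + n)| / |((k + 1 + n).factorial : ℝ)| * x ^ (k + 1)
                ≤ C / (k.factorial : ℝ) * x ^ (k + 1) := by
                  apply mul_le_mul_of_nonneg_right _ (pow_nonneg hx0 _)
                  rw [abs_of_pos (hfac _)]
                  exact div_le_div₀ hC0 (hC _) (hfac k) h1k
              _ = C * x * (x ^ k / (k.factorial : ℝ)) := by rw [pow_succ]; ring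
              _ ≤ C * x * ((1:ℝ) ^ k / (k.factorial : ℝ)) := by
                  have : x ^ k / (k.factorial : ℝ) ≤ (1:ℝ) ^ k / (k.factorial : ℝ) :=
                    div_le_div_of_nonneg_right hxk1 (hfac k).le |>.trans_eq rfl
                  exact mul_le_mul_of_nonneg_left this (by positivity)
        _ = C * x * D := by rw [hD, tsum_mul_left]
    -- conclude f n / n! = 0
    have hzero : |f n / (n.factorial : ℝ)| = 0 := by
      by_contra hne
      have hpos : 0 < |f n / (n.factorial : ℝ)| :=
        lt_of_le_of_ne (abs_nonneg _) (Ne.symm hne)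
      set v := |f n / (n.factorial : ℝ)|
      have hδ : 0 < min 1 (v / (C * D + 1)) := by
        apply lt_min one_pos
        positivity
      obtain ⟨x, hx0, hxδ, hLam⟩ := hdense _ hδ
      have hb := main x hx0 (le_of_lt (lt_of_lt_of_le hxδ (min_le_left _ _))) hLam
      have hx2 : x < v / (C * D + 1) := lt_of_lt_of_le hxδ (min_le_right _ _)
      have : C * x * D < v := by
        have hCD1 : 0 < C * D + 1 := by positivity
        calc C * x * D ≤ x * (C * D + 1) := by nlinarith
          _ < v / (C * D + 1) * (C * D + 1) := by
              exact mul_lt_mul_of_pos_right hx2 hCD1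
          _ = v := by field_simp
      linarith
    have := abs_eq_zero.mp hzero
    have hn : (n.factorial : ℝ) ≠ 0 := (hfac n).ne'
    field_simp at this
    simpa using this
  funext n
  induction n using Nat.strong_induction_on with
  | _ n ih =>
    simp only [Pi.zero_apply]
    exact key n ih
end

section
/- Fix l ∈ ℤ≥0 and a Lévy measure Π with ∫(y∧y²)Π(dy)<∞. Then lim_{n→∞} (1/(n+1)) ∫_0^∞ C(n+1,l) e^{-ly}(1-e^{-y})^{n-l+1} Π(dy) = 0. -/
open MeasureTheory Filter

/-- Pointwise bound: for `n ≥ 2l+3` and `y > 0`,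
`C(n+1,l) e^{-ly} (1-e^{-y})^{n-l+1} ≤ l! 2^l min(y,y²)`. -/
lemma levy_pointwise_bound (l n : ℕ) (hn : 2 * l + 3 ≤ n) {y : ℝ} (hy : 0 < y) :
    ((n + 1).choose l : ℝ) * Real.exp (-(l : ℝ) * y) * (1 - Real.exp (-y)) ^ (n - l + 1)
      ≤ (l.factorial : ℝ) * 2 ^ l * min y (y ^ 2) := by
  set t : ℝ := Real.exp (-y) with ht
  have ht0 : 0 < t := Real.exp_pos _
  have ht1 : t < 1 := by
    rw [ht]; exact Real.exp_lt_one_iff.mpr (by linarith)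
  have h1t : 0 ≤ 1 - t := by linarith
  have h1ty : 1 - t ≤ y := by
    have := Real.add_one_le_exp (-y)
    rw [← ht] at this; linarith
  set m : ℕ := n - l - 1 with hm
  have hmn : n - l + 1 = 2 + m := by omega
  have hn2m : (n : ℝ) + 1 ≤ 2 * m := by
    have : n + 1 ≤ 2 * m := by omega
    exact_mod_cast this
  have hm0 : (0 : ℝ) < m := by
    have : 1 ≤ m := by omega
    exact_mod_cast Nat.lt_of_lt_of_le Nat.zero_lt_one this
  -- exp (-l y) = t ^ l
  have hexp : Real.exp (-(l : ℝ) * y) = t ^ l := by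
    rw [ht, ← Real.exp_nat_mul]; ring_nf
  -- (1-t)^m ≤ exp (-(m t))
  have hpow : (1 - t) ^ m ≤ Real.exp (-(m * t)) := by
    have h : 1 - t ≤ Real.exp (-t) := by
      have := Real.add_one_le_exp (-t); linarith
    calc (1 - t) ^ m ≤ (Real.exp (-t)) ^ m := pow_le_pow_left₀ h1t h m
      _ = Real.exp (-(m * t)) := by rw [← Real.exp_nat_mul]; ring_nf
  -- ((n+1) t)^l ≤ l! 2^l exp (m t)
  have hkey : ((n : ℝ) + 1) ^ l * t ^ l * Real.exp (-(m * t)) ≤ (l.factorial : ℝ) * 2 ^ l := by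
    have h1 : ((m : ℝ) * t) ^ l ≤ (l.factorial : ℝ) * Real.exp (m * t) := by
      have := Real.pow_div_factorial_le_exp (x := (m : ℝ) * t) (by positivity) l
      have hf : (0 : ℝ) < l.factorial := by exact_mod_cast l.factorial_pos
      rw [div_le_iff₀ hf] at this; linarith [this]
    have h2 : ((n : ℝ) + 1) ^ l * t ^ l ≤ 2 ^ l * ((m : ℝ) * t) ^ l := by
      have : ((n : ℝ) + 1) * t ≤ 2 * ((m : ℝ) * t) := by nlinarith
      calc ((n : ℝ) + 1) ^ l * t ^ l = (((n : ℝ) + 1) * t) ^ l := (mul_pow _ _ _).symm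
        _ ≤ (2 * ((m : ℝ) * t)) ^ l := pow_le_pow_left₀ (by positivity) this l
        _ = 2 ^ l * ((m : ℝ) * t) ^ l := mul_pow _ _ _
    have hexppos : (0 : ℝ) < Real.exp (-(m * t)) := Real.exp_pos _
    calc ((n : ℝ) + 1) ^ l * t ^ l * Real.exp (-(m * t))
        ≤ 2 ^ l * ((m : ℝ) * t) ^ l * Real.exp (-(m * t)) := by
          apply mul_le_mul_of_nonneg_right h2 hexppos.le
      _ ≤ 2 ^ l * ((l.factorial : ℝ) * Real.exp (m * t)) * Real.exp (-(m * t)) := by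
          apply mul_le_mul_of_nonneg_right (mul_le_mul_of_nonneg_left h1 (by positivity)) hexppos.le
      _ = (l.factorial : ℝ) * 2 ^ l * (Real.exp (m * t) * Real.exp (-(m * t))) := by ring
      _ = (l.factorial : ℝ) * 2 ^ l := by
          rw [← Real.exp_add]; simp
  -- (1-t)^2 ≤ min y y^2
  have hsq : (1 - t) ^ 2 ≤ min y (y ^ 2) := by
    refine le_min ?_ ?_
    · calc (1 - t) ^ 2 ≤ (1 - t) * 1 := by nlinarith
        _ = 1 - t := mul_one _
        _ ≤ y := h1ty
    · exact pow_le_pow_left₀ h1t h1ty 2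
  have hch : ((n + 1).choose l : ℝ) ≤ ((n : ℝ) + 1) ^ l := by
    have := Nat.choose_le_pow (n + 1) l
    exact_mod_cast this
  calc ((n + 1).choose l : ℝ) * Real.exp (-(l : ℝ) * y) * (1 - Real.exp (-y)) ^ (n - l + 1)
      = ((n + 1).choose l : ℝ) * t ^ l * ((1 - t) ^ 2 * (1 - t) ^ m) := by
        rw [hexp, hmn, pow_add]
    _ ≤ ((n : ℝ) + 1) ^ l * t ^ l * ((1 - t) ^ 2 * Real.exp (-(m * t))) := by
        apply mul_le_mul (mul_le_mul_of_nonneg_right hch (by positivity))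
          (mul_le_mul_of_nonneg_left hpow (by positivity)) (by positivity) (by positivity)
    _ = ((n : ℝ) + 1) ^ l * t ^ l * Real.exp (-(m * t)) * (1 - t) ^ 2 := by ring
    _ ≤ (l.factorial : ℝ) * 2 ^ l * min y (y ^ 2) := by
        have hmin0 : 0 ≤ min y (y ^ 2) := le_min hy.le (by positivity)
        calc ((n : ℝ) + 1) ^ l * t ^ l * Real.exp (-(m * t)) * (1 - t) ^ 2
            ≤ ((l.factorial : ℝ) * 2 ^ l) * (1 - t) ^ 2 :=
              mul_le_mul_of_nonneg_right hkey (by positivity)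
          _ ≤ (l.factorial : ℝ) * 2 ^ l * min y (y ^ 2) :=
              mul_le_mul_of_nonneg_left hsq (by positivity)

/-- For fixed `l` and a Lévy measure `Π` with `∫(y ∧ y²)Π(dy) < ∞`,
`(1/(n+1)) ∫_0^∞ C(n+1,l) e^{-ly}(1-e^{-y})^{n-l+1} Π(dy) → 0` as `n → ∞`. -/
theorem levy_generator_entries_vanish (μ : Measure ℝ)
    (hμ : ∫⁻ y in Set.Ioi (0 : ℝ), ENNReal.ofReal (min y (y ^ 2)) ∂μ < ⊤)
    (l : ℕ) :
    Tendsto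
      (fun n : ℕ => (1 / ((n : ℝ) + 1)) *
        ∫ y in Set.Ioi (0 : ℝ), ((n + 1).choose l : ℝ) * Real.exp (-(l : ℝ) * y) *
          (1 - Real.exp (-y)) ^ (n - l + 1) ∂μ)
      atTop (nhds 0) := by
  set g : ℝ → ℝ := fun y => min y (y ^ 2) with hg
  have hg_nonneg : ∀ y ∈ Set.Ioi (0 : ℝ), 0 ≤ g y := fun y hy =>
    le_min (le_of_lt hy) (by positivity)
  have hg_int : IntegrableOn g (Set.Ioi (0 : ℝ)) μ := by
    constructor
    · exact ((continuous_id.min (continuous_pow 2))).aestronglyMeasurable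
    · rw [hasFiniteIntegral_iff_ofReal]
      · exact hμ
      · exact (ae_restrict_iff' measurableSet_Ioi).mpr (Filter.Eventually.of_forall hg_nonneg)
  set M : ℝ := ∫ y in Set.Ioi (0 : ℝ), g y ∂μ with hM
  set K : ℝ := (l.factorial : ℝ) * 2 ^ l with hK
  have hK0 : 0 ≤ K := by positivity
  -- squeeze
  apply squeeze_zero'
  · filter_upwards with n
    apply mul_nonneg (by positivity)
    apply setIntegral_nonneg measurableSet_Ioi
    intro y hy
    have : 0 ≤ 1 - Real.exp (-y) := by
      have : Real.exp (-y) ≤ 1 := Real.exp_le_one_iff.mpr (by simpa using le_of_lt hy)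
      linarith
    positivity
  · show ∀ᶠ n in atTop, _ ≤ (fun n : ℕ => 1 / ((n : ℝ) + 1) * (K * M)) n
    filter_upwards [eventually_ge_atTop (2 * l + 3)] with n hn
    have hint : (∫ y in Set.Ioi (0 : ℝ), ((n + 1).choose l : ℝ) * Real.exp (-(l : ℝ) * y) *
        (1 - Real.exp (-y)) ^ (n - l + 1) ∂μ) ≤ K * M := by
      rw [hM, ← integral_const_mul]
      apply integral_mono_of_nonneg
      · refine (ae_restrict_iff' measurableSet_Ioi).mpr (Filter.Eventually.of_forall ?_)
        intro y hy
        have : 0 ≤ 1 - Real.exp (-y) := by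
          have : Real.exp (-y) ≤ 1 := Real.exp_le_one_iff.mpr (by simpa using le_of_lt hy)
          linarith
        positivity
      · exact hg_int.const_mul K
      · refine (ae_restrict_iff' measurableSet_Ioi).mpr (Filter.Eventually.of_forall ?_)
        intro y hy
        exact levy_pointwise_bound l n hn hy
    exact mul_le_mul_of_nonneg_left hint (by positivity)
  · have := tendsto_one_div_add_atTop_nhds_zero_nat.mul_const (K * M)
    simpa using this
end

section
/- Every discrete self-similar Markov chain on ℤ≥0 is upward skip-free: if a generator matrix 𝔾 on ℤ≥0 (with 𝔾(n,k) ≥ 0 for k ≠ n and row sums zero) satisfies, for all α ∈ (0,1) and n, l ∈ ℤ≥0, the commutation identity ∑_{k ≥ l} 𝔾(n,k) C(k,l) α^l (1-α)^{k-l} = ∑_{j ≤ n} α^{j+1}(1-α)^{n-j} C(n,j) 𝔾(j,l) (i.e. 𝔾𝔻_α = α𝔻_α𝔾), then 𝔾(n,k) = 0 for all k ≥ n+2. -/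
/-- Every discrete self-similar Markov chain is upward skip-free: if a generator matrix
`G` (nonnegative off the diagonal, rows summing to zero) satisfies the commutation
identity `𝔾 𝔻_α = α 𝔻_α 𝔾` for all `α ∈ (0,1)`, then `G n k = 0` whenever `k ≥ n + 2`. -/
theorem discrete_self_similar_skip_free (G : ℕ → ℕ → ℝ)
    (hpos : ∀ n k, k ≠ n → 0 ≤ G n k)
    (hrow : ∀ n, HasSum (fun k => G n k) 0)
    (hcomm : ∀ α ∈ Set.Ioo (0 : ℝ) 1, ∀ n l : ℕ,
      HasSum (fun k => G n k * (k.choose l : ℝ) * α ^ l * (1 - α) ^ (k - l))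
        (∑ j ∈ Finset.range (n + 1),
          α ^ (j + 1) * (1 - α) ^ (n - j) * (n.choose j : ℝ) * G j l)) :
    ∀ n k, n + 2 ≤ k → G n k = 0 := by
  intro n
  induction n using Nat.strong_induction_on with
  | _ n IH =>
    intro k hk
    have hα : (1/2 : ℝ) ∈ Set.Ioo (0:ℝ) 1 := by norm_num
    have h := hcomm (1/2) hα n (n+1)
    set f : ℕ → ℝ := fun k =>
      G n k * ((k.choose (n+1) : ℝ)) * (1/2:ℝ) ^ (n+1) * (1 - 1/2:ℝ) ^ (k - (n+1)) with hf
    have hfnonneg : ∀ i, 0 ≤ f i := by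
      intro i
      rcases le_or_gt i n with h1 | h1
      · simp [hf, Nat.choose_eq_zero_of_lt (by omega : i < n+1)]
      · have hne : i ≠ n := by omega
        have := hpos n i hne
        simp only [hf]
        positivity
    have hS : (∑ j ∈ Finset.range (n + 1),
        (1/2:ℝ) ^ (j + 1) * (1 - 1/2:ℝ) ^ (n - j) * (n.choose j : ℝ) * G j (n+1)) = f (n+1) := by
      rw [Finset.sum_eq_single_of_mem n (Finset.self_mem_range_succ n)]
      · simp [hf]; ring
      · intro j hj hjne
        have hj' : j < n := by
          have := Finset.mem_range.mp hj; omega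
        rw [IH j hj' (n+1) (by omega)]
        ring
    rw [hS] at h
    have hle : f (n+1) + f k ≤ f (n+1) := by
      have := sum_le_hasSum ({n+1, k} : Finset ℕ) (fun i _ => hfnonneg i) h
      simpa [Finset.sum_pair (by omega : n+1 ≠ k)] using this
    have hfk0 : f k = 0 := le_antisymm (by linarith) (hfnonneg k)
    have hne : ((k.choose (n+1):ℝ) * ((1/2:ℝ)^(n+1) * (1 - 1/2:ℝ)^(k-(n+1)))) ≠ 0 := by
      have hch : (0:ℝ) < (k.choose (n+1) : ℝ) := by
        exact_mod_cast Nat.cast_pos.mpr (Nat.choose_pos (by omega))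
      positivity
    have hmul : G n k * ((k.choose (n+1):ℝ) * ((1/2:ℝ)^(n+1) * (1 - 1/2:ℝ)^(k-(n+1)))) = 0 := by
      rw [← hfk0]; simp only [hf]; ring
    exact (mul_eq_zero.mp hmul).resolve_right hne
end

section
/- Factorial moments of the skip-free Laguerre semigroup: 𝕂_t^φ p_k(n) = ∑_{l=0}^k C(k,l) (W_φ(k+1)/W_φ(l+1)) e^{-tl} (1-e^{-t})^{k-l} p_l(n) for all t ≥ 0 and k, n ∈ ℤ≥0. In particular lim_{t→∞} 𝕂_t^φ p_k(n) = W_φ(k+1). -/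
open Filter

/-- The falling factorial `p_k(n) = n!/(n-k)!` (zero if `k > n`). -/
def pfall (k n : ℕ) : ℝ := (n.descFactorial k : ℝ)

lemma DD_pfall (α : ℝ) (k n : ℕ) : DD α (pfall k) n = α ^ k * pfall k n := by
  unfold DD pfall
  rcases le_or_gt k n with hkn | hkn
  · have h1 : ∀ r ∈ Finset.range (n + 1),
        (n.choose r : ℝ) * α ^ r * (1 - α) ^ (n - r) * (r.descFactorial k : ℝ) =
        ((k.factorial : ℝ) * ((n.choose r : ℝ) * (r.choose k : ℝ))) * (α ^ r * (1 - α) ^ (n - r)) := by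
      intro r _
      rw [Nat.descFactorial_eq_factorial_mul_choose]
      push_cast; ring
    rw [Finset.sum_congr rfl h1]
    have h2 : ∀ r ∈ Finset.range (n + 1), r ∉ Finset.Ico k (n + 1) →
        ((k.factorial : ℝ) * ((n.choose r : ℝ) * (r.choose k : ℝ))) * (α ^ r * (1 - α) ^ (n - r)) = 0 := by
      intro r hr hr'
      simp only [Finset.mem_Ico, Finset.mem_range] at hr hr'
      rw [Nat.choose_eq_zero_of_lt (show r < k by omega)]
      simp
    rw [← Finset.sum_subset (fun x hx => Finset.mem_range.mpr (Finset.mem_Ico.mp hx).2) h2,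
      Finset.sum_Ico_eq_sum_range]
    have h3 : ∀ j ∈ Finset.range (n + 1 - k),
        ((k.factorial : ℝ) * ((n.choose (k + j) : ℝ) * ((k + j).choose k : ℝ))) *
          (α ^ (k + j) * (1 - α) ^ (n - (k + j))) =
        ((k.factorial : ℝ) * (n.choose k : ℝ)) * α ^ k *
          (((n - k).choose j : ℝ) * (α ^ j * (1 - α) ^ (n - k - j))) := by
      intro j hj
      simp only [Finset.mem_range] at hj
      have hc : (n.choose (k + j)) * ((k + j).choose k) = n.choose k * (n - k).choose j := by
        have := Nat.choose_mul (n := n) (Nat.le_add_right k j)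
        simpa using this
      have hnk : n - (k + j) = n - k - j := by omega
      have hc' : ((n.choose (k + j) : ℝ)) * (((k + j).choose k : ℝ)) =
          (n.choose k : ℝ) * ((n - k).choose j : ℝ) := by exact_mod_cast hc
      rw [hnk, pow_add]
      linear_combination (k.factorial : ℝ) * (α ^ k * α ^ j * (1 - α) ^ (n - k - j)) * hc'
    rw [Finset.sum_congr rfl h3, ← Finset.mul_sum]
    have hb : ∑ j ∈ Finset.range (n + 1 - k),
        ((n - k).choose j : ℝ) * (α ^ j * (1 - α) ^ (n - k - j)) = 1 := by
      have hr : n + 1 - k = (n - k) + 1 := by omega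
      rw [hr]
      have := add_pow α (1 - α) (n - k)
      simp only [add_sub_cancel, one_pow] at this
      rw [Finset.sum_congr rfl (fun j (hj : j ∈ Finset.range (n - k + 1)) =>
        show ((n - k).choose j : ℝ) * (α ^ j * (1 - α) ^ (n - k - j)) =
          α ^ j * (1 - α) ^ (n - k - j) * ((n - k).choose j : ℝ) by ring)]
      exact this.symm
    rw [hb, mul_one, Nat.descFactorial_eq_factorial_mul_choose]
    push_cast
    ring
  · have h0 : ∀ r ∈ Finset.range (n + 1),
        (n.choose r : ℝ) * α ^ r * (1 - α) ^ (n - r) * (r.descFactorial k : ℝ) = 0 := by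
      intro r hr
      simp only [Finset.mem_range] at hr
      rw [Nat.descFactorial_eq_zero_iff_lt.mpr (by omega)]
      simp
    rw [Finset.sum_congr rfl h0, Finset.sum_const, smul_zero,
      Nat.descFactorial_eq_zero_iff_lt.mpr hkn]
    simp

/-- Factorial moments of the skip-free Laguerre semigroup
`𝕂_t^φ = ℚ^φ_{e^t-1} 𝔻_{e^{-t}}`:
`𝕂_t^φ p_k(n) = ∑_{l=0}^k C(k,l)(W_φ(k+1)/W_φ(l+1)) e^{-tl}(1-e^{-t})^{k-l} p_l(n)`,
and in particular `𝕂_t^φ p_k(n) → W_φ(k+1)` as `t → ∞`. -/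
theorem laguerre_factorial_moments (φ : ℕ → ℝ) (W : ℕ → ℝ)
    (hW : ∀ k, W k = ∏ r ∈ Finset.range k, φ (r + 1))
    (Q : ℝ → (ℕ → ℝ) → ℕ → ℝ)
    (hQ : ∀ t ≥ (0 : ℝ), ∀ k n : ℕ,
      Q t (pfall k) n =
        ∑ l ∈ Finset.range (k + 1),
          (k.choose l : ℝ) * (W k / W l) * pfall l n * t ^ (k - l))
    (hlin : ∀ (t c : ℝ) (f : ℕ → ℝ),
      Q t (fun m => c * f m) = fun n => c * Q t f n) :
    ∀ k n : ℕ,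
      (∀ t ≥ (0 : ℝ),
        Q (Real.exp t - 1) (DD (Real.exp (-t)) (pfall k)) n =
          ∑ l ∈ Finset.range (k + 1),
            (k.choose l : ℝ) * (W k / W l) * Real.exp (-t) ^ l *
              (1 - Real.exp (-t)) ^ (k - l) * pfall l n) ∧
      Tendsto (fun t : ℝ => Q (Real.exp t - 1) (DD (Real.exp (-t)) (pfall k)) n)
        atTop (nhds (W k)) := by
  intro k n
  have key : ∀ t ≥ (0 : ℝ),
      Q (Real.exp t - 1) (DD (Real.exp (-t)) (pfall k)) n =
        ∑ l ∈ Finset.range (k + 1),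
          (k.choose l : ℝ) * (W k / W l) * Real.exp (-t) ^ l *
            (1 - Real.exp (-t)) ^ (k - l) * pfall l n := by
    intro t ht
    have hD : DD (Real.exp (-t)) (pfall k) =
        fun m => Real.exp (-t) ^ k * pfall k m := funext fun m => DD_pfall _ _ _
    have ht' : Real.exp t - 1 ≥ 0 := by
      have := Real.one_le_exp ht
      linarith
    rw [hD, hlin]
    dsimp only
    rw [hQ _ ht', Finset.mul_sum]
    refine Finset.sum_congr rfl fun l hl => ?_
    simp only [Finset.mem_range] at hl
    have hlk : l ≤ k := by omega
    have h1 : Real.exp (-t) ^ k = Real.exp (-t) ^ l * Real.exp (-t) ^ (k - l) := by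
      rw [← pow_add]; congr 1; omega
    have h2 : Real.exp (-t) * (Real.exp t - 1) = 1 - Real.exp (-t) := by
      rw [mul_sub, ← Real.exp_add]
      simp
    have h3 : Real.exp (-t) ^ (k - l) * (Real.exp t - 1) ^ (k - l) =
        (1 - Real.exp (-t)) ^ (k - l) := by rw [← mul_pow, h2]
    rw [h1]
    linear_combination (Real.exp (-t) ^ l * ((k.choose l : ℝ) * (W k / W l) * pfall l n)) * h3
  refine ⟨key, ?_⟩
  have hexp : Tendsto (fun t : ℝ => Real.exp (-t)) atTop (nhds 0) := by
    exact Real.tendsto_exp_atBot.comp tendsto_neg_atTop_atBot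
  have hsum : Tendsto (fun t : ℝ =>
      ∑ l ∈ Finset.range (k + 1),
        (k.choose l : ℝ) * (W k / W l) * Real.exp (-t) ^ l *
          (1 - Real.exp (-t)) ^ (k - l) * pfall l n) atTop
      (nhds (∑ l ∈ Finset.range (k + 1),
        (k.choose l : ℝ) * (W k / W l) * (0 : ℝ) ^ l *
          (1 - (0 : ℝ)) ^ (k - l) * pfall l n)) := by
    refine tendsto_finset_sum _ fun l hl => ?_
    have hc : Continuous (fun x : ℝ =>
        (k.choose l : ℝ) * (W k / W l) * x ^ l * (1 - x) ^ (k - l) * pfall l n) := by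
      continuity
    exact (hc.tendsto 0).comp hexp
  have hval : (∑ l ∈ Finset.range (k + 1),
      (k.choose l : ℝ) * (W k / W l) * (0 : ℝ) ^ l *
        (1 - (0 : ℝ)) ^ (k - l) * pfall l n) = W k := by
    rw [Finset.sum_eq_single_of_mem 0 (Finset.mem_range.mpr (by omega))]
    · have hW0 : W 0 = 1 := by rw [hW]; simp
      simp [pfall, hW0]
    · intro l hl hl0
      rw [zero_pow hl0]
      ring
  rw [← hval]
  refine hsum.congr' ?_
  filter_upwards [eventually_ge_atTop (0 : ℝ)] with t ht
  exact (key t ht).symm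
end
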